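/- arXiv:0905.1937 — 5 statements merged into one kernel-verified Lean document; each statement's English description precedes it below -/
import Mathlib

section
/- Let N ≥ 5, let V(r) = 1/(r² − (9/10) r^{N/2+1}) and W₁(r) = (N−4)² / (4 (r² − r^{N/2})(r² − (9/10) r^{N/2+1})) for r ∈ (0,1), and define ψ(r) = r^{−N/2+2} − 1. Then ψ is positive on (0,1) and is a super-solution of the ODE y''(r) + ((N−1)/r + V'(r)/V(r)) y'(r) + (W₁(r)/V(r)) y(r) = 0 on (0,1); that is, ψ''(r) + ((N−1)/r + V'(r)/V(r)) ψ'(r) + (W₁(r)/V(r)) ψ(r) ≤ 0 for all r ∈ (0,1). -/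
open Real

set_option maxHeartbeats 1000000

theorem psi_supersolution (N : ℕ) (hN : 5 ≤ N)
    (V W₁ ψ : ℝ → ℝ)
    (hV : ∀ r : ℝ, V r = 1 / (r ^ 2 - 9 / 10 * r ^ ((N : ℝ) / 2 + 1)))
    (hW : ∀ r : ℝ, W₁ r = ((N : ℝ) - 4) ^ 2 /
      (4 * (r ^ 2 - r ^ ((N : ℝ) / 2)) * (r ^ 2 - 9 / 10 * r ^ ((N : ℝ) / 2 + 1))))
    (hψ : ∀ r : ℝ, ψ r = r ^ (-(N : ℝ) / 2 + 2) - 1) :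
    ∀ r ∈ Set.Ioo (0 : ℝ) 1,
      0 < ψ r ∧
      deriv (deriv ψ) r + (((N : ℝ) - 1) / r + deriv V r / V r) * deriv ψ r +
        (W₁ r / V r) * ψ r ≤ 0 := by
  have hψfun : ψ = fun x : ℝ => x ^ (-(N : ℝ) / 2 + 2) - 1 := funext hψ
  have hVfun : V = fun x : ℝ => 1 / (x ^ 2 - 9 / 10 * x ^ ((N : ℝ) / 2 + 1)) := funext hV
  set a : ℝ := -(N : ℝ) / 2 + 2 with ha
  have hN5 : (5 : ℝ) ≤ (N : ℝ) := by exact_mod_cast hN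
  have haneg : a < 0 := by rw [ha]; linarith
  have hNa : (N : ℝ) = 4 - 2 * a := by rw [ha]; ring
  -- derivative of ψ away from 0
  have hψ' : ∀ x : ℝ, x ≠ 0 → HasDerivAt ψ (a * x ^ (a - 1)) x := by
    intro x hx
    rw [hψfun]
    exact (Real.hasDerivAt_rpow_const (Or.inl hx)).sub_const 1
  intro r hr
  obtain ⟨hr0, hr1⟩ := hr
  have hrne : r ≠ 0 := ne_of_gt hr0
  set t : ℝ := r ^ a with htdef
  have ht0 : 0 < t := Real.rpow_pos_of_pos hr0 a
  have ht1 : 1 < t := (Real.one_lt_rpow_iff_of_pos hr0).mpr (Or.inr ⟨hr1, haneg⟩)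
  -- rpow rewrites
  have hpa1 : r ^ (a - 1) = t / r := by rw [Real.rpow_sub hr0, Real.rpow_one]
  have hpa2 : r ^ (a - 2) = t / r ^ 2 := by
    rw [Real.rpow_sub hr0]; norm_num [Real.rpow_natCast]; rw [htdef]
  have hN2 : (N : ℝ) / 2 = 2 - a := by rw [ha]; ring
  have hpN : r ^ ((N : ℝ) / 2) = r ^ 2 / t := by
    rw [hN2, Real.rpow_sub hr0, htdef]; norm_num [Real.rpow_natCast]
  have hpN1 : r ^ ((N : ℝ) / 2 + 1) = r ^ 3 / t := by
    have : (N : ℝ) / 2 + 1 = 3 - a := by rw [ha]; ring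
    rw [this, Real.rpow_sub hr0, show (3:ℝ)=((3:ℕ):ℝ) by norm_num, Real.rpow_natCast,
      htdef]
  -- positivity of denominators
  have hg : 0 < r ^ 2 - 9 / 10 * r ^ ((N : ℝ) / 2 + 1) := by
    rw [hpN1]
    have h1 : r ^ 3 / t ≤ r ^ 3 := by
      rw [div_le_iff₀ ht0]
      nlinarith [mul_pos (pow_pos hr0 3) (show (0:ℝ) < t - 1 by linarith)]
    have h2 : r ^ 3 ≤ r ^ 2 := by nlinarith
    nlinarith
  have hgne : r ^ 2 - 9 / 10 * r ^ ((N : ℝ) / 2 + 1) ≠ 0 := ne_of_gt hg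
  have hh : 0 < r ^ 2 - r ^ ((N : ℝ) / 2) := by
    rw [hpN]
    have : r ^ 2 / t < r ^ 2 := div_lt_self (by positivity) ht1
    linarith
  have hhne : r ^ 2 - r ^ ((N : ℝ) / 2) ≠ 0 := ne_of_gt hh
  -- ψ positivity
  have hψpos : 0 < ψ r := by rw [hψ r, ← htdef]; linarith
  refine ⟨hψpos, ?_⟩
  -- first derivative of ψ
  have hdψ : deriv ψ r = a * r ^ (a - 1) := (hψ' r hrne).deriv
  -- second derivative of ψ
  have hev : deriv ψ =ᶠ[nhds r] fun x => a * x ^ (a - 1) := by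
    filter_upwards [eventually_ne_nhds hrne] with x hx
    exact (hψ' x hx).deriv
  have hddψ : deriv (deriv ψ) r = a * ((a - 1) * r ^ (a - 2)) := by
    rw [hev.deriv_eq]
    have := ((Real.hasDerivAt_rpow_const (p := a - 1) (Or.inl hrne)).const_mul a).deriv
    rw [this, show a - 1 - 1 = a - 2 by ring]
  -- derivative of V
  set g' : ℝ := 2 * r - 9 / 10 * (((N : ℝ) / 2 + 1) * r ^ ((N : ℝ) / 2)) with hg'def
  have hgd : HasDerivAt (fun x : ℝ => x ^ 2 - 9 / 10 * x ^ ((N : ℝ) / 2 + 1)) g' r := by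
    have h1 : HasDerivAt (fun x : ℝ => x ^ 2) (2 * r) r := by
      simpa using hasDerivAt_pow 2 r
    have h2 : HasDerivAt (fun x : ℝ => x ^ ((N : ℝ) / 2 + 1))
        (((N : ℝ) / 2 + 1) * r ^ ((N : ℝ) / 2)) r := by
      have := Real.hasDerivAt_rpow_const (p := (N : ℝ) / 2 + 1) (Or.inl hrne)
      simpa using this
    exact h1.sub (h2.const_mul (9 / 10))
  have hVd : deriv V r = -g' / (r ^ 2 - 9 / 10 * r ^ ((N : ℝ) / 2 + 1)) ^ 2 := by
    rw [hVfun]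
    have := ((hasDerivAt_const r (1 : ℝ)).div hgd hgne).deriv
    rw [show (fun x : ℝ => 1 / (x ^ 2 - 9 / 10 * x ^ ((N : ℝ) / 2 + 1))) =
      (fun x => 1) / (fun x : ℝ => x ^ 2 - 9 / 10 * x ^ ((N : ℝ) / 2 + 1)) from rfl, this]; ring
  -- the main computation
  rw [hddψ, hdψ, hVd, hW, hV, hψ, hg'def, hpa1, hpa2, hpN, hpN1, ← htdef]
  have hgt : (0 : ℝ) < r ^ 2 - 9 / 10 * (r ^ 3 / t) := by rw [hpN1] at hg; exact hg
  have hgtne := ne_of_gt hgt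
  have hhtne : r ^ 2 - r ^ 2 / t ≠ 0 := by rw [hpN] at hhne; exact hhne
  have hGp : (0 : ℝ) < 10 * t * r ^ 2 - 9 * r ^ 3 := by
    have h1 := mul_pos ht0 hgt
    have h2 : t * (r ^ 2 - 9 / 10 * (r ^ 3 / t)) = t * r ^ 2 - 9 / 10 * r ^ 3 := by
      field_simp
    nlinarith
  have hGne' : 10 * t * r ^ 2 - 9 * r ^ 3 ≠ 0 := ne_of_gt hGp
  have hHp : (0 : ℝ) < t * r ^ 2 - r ^ 2 := by
    nlinarith [mul_pos (pow_pos hr0 2) (show (0:ℝ) < t - 1 by linarith)]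
  have hHne' : t * r ^ 2 - r ^ 2 ≠ 0 := ne_of_gt hHp
  clear_value a t g'
  have key : a * ((a - 1) * (t / r ^ 2)) +
      (((N : ℝ) - 1) / r +
        -(2 * r - 9 / 10 * (((N : ℝ) / 2 + 1) * (r ^ 2 / t))) /
            (r ^ 2 - 9 / 10 * (r ^ 3 / t)) ^ 2 /
          (1 / (r ^ 2 - 9 / 10 * (r ^ 3 / t)))) * (a * (t / r)) +
      ((N : ℝ) - 4) ^ 2 /
          (4 * (r ^ 2 - r ^ 2 / t) * (r ^ 2 - 9 / 10 * (r ^ 3 / t))) /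
          (1 / (r ^ 2 - 9 / 10 * (r ^ 3 / t))) * (t - 1) =
      9 / 10 * a * (1 - a) * r / (r ^ 2 - 9 / 10 * (r ^ 3 / t)) := by
    have hGeq : r ^ 2 - 9 / 10 * (r ^ 3 / t) = (10 * t * r ^ 2 - 9 * r ^ 3) / (10 * t) := by
      field_simp
    have hHeq : r ^ 2 - r ^ 2 / t = (t * r ^ 2 - r ^ 2) / t := by
      field_simp
    rw [hNa, hGeq, hHeq]
    have h1 : t - 1 ≠ 0 := by
      intro h; apply hHne'; linear_combination r ^ 2 * h
    have h1' : -1 + t ≠ 0 := by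
      intro h; apply h1; linear_combination h
    have h2 : t * 10 - r * 9 ≠ 0 := by
      intro h; apply hGne'; linear_combination r ^ 2 * h
    have h3 : -(t * 10) - t * r * 9 + t ^ 2 * 10 + r * 9 ≠ 0 := by
      intro h; apply mul_ne_zero h1 h2; linear_combination h
    field_simp
    ring_nf
  rw [key]
  apply div_nonpos_of_nonpos_of_nonneg _ (le_of_lt hgt)
  have h1a : 0 < 1 - a := by linarith
  nlinarith [mul_pos h1a hr0]
end

section
/- Let N ≥ 5 and define y(r) = r^{−N/2+2} − 1 for r ∈ (0,1). Then y is positive on (0,1) and satisfies y''(r) + ((N−3)/r) y'(r) + ((N−4)²/(4(r² − r^{N/2}))) y(r) = 0 for all r ∈ (0,1). -/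
open Real

theorem y_positive_solution (N : ℕ) (hN : 5 ≤ N)
    (y : ℝ → ℝ) (hy : ∀ r : ℝ, y r = r ^ (-(N : ℝ) / 2 + 2) - 1) :
    ∀ r ∈ Set.Ioo (0 : ℝ) 1,
      0 < y r ∧
      deriv (deriv y) r + ((N : ℝ) - 3) / r * deriv y r +
        ((N : ℝ) - 4) ^ 2 / (4 * (r ^ 2 - r ^ ((N : ℝ) / 2))) * y r = 0 := by
  intro r hr
  obtain ⟨hr0, hr1⟩ := hr
  have hN5 : (5:ℝ) ≤ (N:ℝ) := by exact_mod_cast hN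
  set a : ℝ := -(N : ℝ) / 2 + 2 with ha
  have haneg : a < 0 := by rw [ha]; linarith
  have hfun : y = fun x => x ^ a - 1 := funext hy
  -- positivity
  have hgt : (1:ℝ) < r ^ a := by
    have := Real.rpow_lt_rpow_of_exponent_gt hr0 hr1 haneg
    simpa using this
  have hpos : 0 < y r := by rw [hy r]; linarith
  refine ⟨hpos, ?_⟩
  -- first derivative
  have hd1 : ∀ x : ℝ, x ≠ 0 → HasDerivAt y (a * x ^ (a - 1)) x := by
    intro x hx
    rw [hfun]
    simpa using (Real.hasDerivAt_rpow_const (Or.inl hx)).sub_const 1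
  have hev : deriv y =ᶠ[nhds r] fun x => a * x ^ (a - 1) := by
    filter_upwards [eventually_ne_nhds hr0.ne'] with x hx
    exact (hd1 x hx).deriv
  have hd2 : deriv (deriv y) r = a * ((a - 1) * r ^ (a - 1 - 1)) := by
    rw [hev.deriv_eq]
    exact (((Real.hasDerivAt_rpow_const (Or.inl hr0.ne')).const_mul a)).deriv
  have hd1' : deriv y r = a * r ^ (a - 1) := (hd1 r hr0.ne').deriv
  -- rpow identities
  set p : ℝ := r ^ (-(N:ℝ)/2) with hp
  have hppos : 0 < p := Real.rpow_pos_of_pos hr0 _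
  have h1 : r ^ (a - 1 - 1) = p := by rw [ha, hp]; ring_nf
  have h2 : r ^ (a - 1) = p * r := by
    rw [ha, hp, show -(N:ℝ)/2 + 2 - 1 = -(N:ℝ)/2 + 1 by ring,
      Real.rpow_add hr0, Real.rpow_one]
  have h3 : r ^ a = p * r ^ (2:ℕ) := by
    rw [ha, hp, Real.rpow_add hr0, Real.rpow_two]
  have h4 : r ^ ((N:ℝ)/2) * p = 1 := by
    rw [hp, ← Real.rpow_add hr0, show (N:ℝ)/2 + -(N:ℝ)/2 = 0 by ring, Real.rpow_zero]
  -- denominator positive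
  have hden : 0 < r ^ (2:ℕ) - r ^ ((N:ℝ)/2) := by
    have h2lt : (2:ℝ) < (N:ℝ)/2 := by linarith
    have := Real.rpow_lt_rpow_of_exponent_gt hr0 hr1 h2lt
    rw [← Real.rpow_natCast r 2]
    push_cast
    linarith [this]
  rw [hd2, hd1', hy r, h1, h2, h3]
  have hD : r ^ (2:ℕ) - r ^ ((N:ℝ)/2) ≠ 0 := ne_of_gt hden
  have key : p * r ^ (2:ℕ) - 1 = (r ^ (2:ℕ) - r ^ ((N:ℝ)/2)) * p := by
    linear_combination h4
  rw [key, ha]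
  field_simp
  ring
end

section
/- Let N = 13 and define w_{3.5}(x) = −4 ln|x| − 8/7 + (8/7)|x|^{7/2} on ℝ^N \ {0}. Then for every x with 0 < |x| < 1, Δ²w_{3.5}(x) ≤ 2525 e^{w_{3.5}(x)}. -/
open Real MeasureTheory Metric

noncomputable def lap {N : ℕ} (u : EuclideanSpace ℝ (Fin N) → ℝ)
    (x : EuclideanSpace ℝ (Fin N)) : ℝ :=
  ∑ i : Fin N, iteratedFDeriv ℝ 2 u x ![EuclideanSpace.single i 1, EuclideanSpace.single i 1]

section radial
variable {N : ℕ}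

local notation "E" => EuclideanSpace ℝ (Fin N)

noncomputable def innerB : EuclideanSpace ℝ (Fin N) →L[ℝ]
    EuclideanSpace ℝ (Fin N) →L[ℝ] ℝ := innerSL ℝ

@[simp] lemma innerB_apply (x y : E) : innerB x y = inner ℝ x y := rfl

lemma hasFDerivAt_normsq (y : E) :
    HasFDerivAt (fun z : E => ‖z‖^2) ((2:ℝ) • (innerB y)) y := by
  have h := (hasStrictFDerivAt_norm_sq y).hasFDerivAt
  convert h using 1
  · rfl
  · rfl
  · rfl
  ext z
  show (2:ℝ) • (inner ℝ y z : ℝ) = ((2:ℕ) • (innerSL ℝ y)) z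
  simp [two_smul]
  ring

/-- derivative of `y ↦ G (‖y‖^2)` at a point where `G` is differentiable. -/
lemma hasFDerivAt_radial (G : ℝ → ℝ) (G' : ℝ → ℝ) (y : E)
    (hG : HasDerivAt G (G' (‖y‖^2)) (‖y‖^2)) :
    HasFDerivAt (fun z : E => G (‖z‖^2))
      (G' (‖y‖^2) • ((2:ℝ) • (innerB y))) y :=
  hG.comp_hasFDerivAt y (hasFDerivAt_normsq y)

lemma lap_radial (G G' G'' : ℝ → ℝ)
    (hG : ∀ s : ℝ, 0 < s → HasDerivAt G (G' s) s)
    (hG' : ∀ s : ℝ, 0 < s → HasDerivAt G' (G'' s) s)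
    (x : E) (hx : x ≠ 0) :
    lap (fun z : E => G (‖z‖^2)) x
      = 4 * ‖x‖^2 * G'' (‖x‖^2) + 2 * N * G' (‖x‖^2) := by
  have hxn : (0:ℝ) < ‖x‖ := norm_pos_iff.mpr hx
  have hxs : (0:ℝ) < ‖x‖^2 := by positivity
  set s : ℝ := ‖x‖^2 with hs
  set F1 : E → (E →L[ℝ] ℝ) := fun y => G' (‖y‖^2) • ((2:ℝ) • (innerB y)) with hF1
  have hmem : {y : E | y ≠ 0} ∈ nhds x := IsOpen.mem_nhds isOpen_compl_singleton hx
  have hfd : fderiv ℝ (fun z : E => G (‖z‖^2)) =ᶠ[nhds x] F1 := by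
    filter_upwards [hmem] with y hy
    have hyn : (0:ℝ) < ‖y‖ := norm_pos_iff.mpr hy
    have hys : (0:ℝ) < ‖y‖^2 := by positivity
    exact (hasFDerivAt_radial G G' y (hG _ hys)).fderiv
  have hM : HasFDerivAt (fun y : E => (2:ℝ) • (innerB y))
      ((2:ℝ) • (innerB (N := N))) x := ((2:ℝ) • (innerB (N := N))).hasFDerivAt
  have hc : HasFDerivAt (fun y : E => G' (‖y‖^2))
      (G'' s • ((2:ℝ) • (innerB x))) x :=
    hasFDerivAt_radial G' G'' x (hG' _ hxs)
  have hF1' : HasFDerivAt F1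
      (G' s • ((2:ℝ) • (innerB (N := N)))
        + (G'' s • ((2:ℝ) • (innerB x))).smulRight ((2:ℝ) • (innerB x))) x :=
    hc.smul hM
  have h2 : fderiv ℝ (fderiv ℝ (fun z : E => G (‖z‖^2))) x
      = G' s • ((2:ℝ) • (innerB (N := N)))
        + (G'' s • ((2:ℝ) • (innerB x))).smulRight ((2:ℝ) • (innerB x)) := by
    rw [hfd.fderiv_eq]; exact hF1'.fderiv
  unfold lap
  have key : ∀ i : Fin N,
      iteratedFDeriv ℝ 2 (fun z : E => G (‖z‖^2)) x
        ![EuclideanSpace.single i 1, EuclideanSpace.single i 1]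
      = 2 * G' s + 4 * G'' s * (x i)^2 := by
    intro i
    rw [iteratedFDeriv_two_apply, h2]
    simp only [Matrix.cons_val_zero, Matrix.cons_val_one, Matrix.head_cons,
      ContinuousLinearMap.add_apply, ContinuousLinearMap.smul_apply,
      ContinuousLinearMap.smulRight_apply, innerB_apply, smul_eq_mul]
    have h1 : (inner ℝ x (EuclideanSpace.single i (1:ℝ)) : ℝ) = x i := by
      rw [EuclideanSpace.inner_single_right]; simp
    have h2 : (inner ℝ (EuclideanSpace.single i (1:ℝ)) (EuclideanSpace.single i (1:ℝ)) : ℝ) = 1 := by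
      rw [EuclideanSpace.inner_single_right]; simp [EuclideanSpace.single_apply]
    rw [h1, h2]
    ring
  rw [Finset.sum_congr rfl (fun i _ => key i)]
  rw [Finset.sum_add_distrib, Finset.sum_const, Finset.card_univ, Fintype.card_fin]
  have hsum : ∑ i : Fin N, 4 * G'' s * (x i)^2 = 4 * G'' s * ∑ i : Fin N, (x i)^2 := by
    rw [Finset.mul_sum]
  have hnorm : ∑ i : Fin N, (x i)^2 = ‖x‖^2 := by
    rw [EuclideanSpace.norm_eq, Real.sq_sqrt (by positivity)]
    simp [sq_abs]
  rw [hsum, hnorm]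
  ring

lemma lap_congr {f g : E → ℝ} {x : E} (h : f =ᶠ[nhds x] g) : lap f x = lap g x := by
  unfold lap
  have h2 : fderiv ℝ (fderiv ℝ f) x = fderiv ℝ (fderiv ℝ g) x :=
    (h.fderiv (𝕜 := ℝ)).fderiv_eq
  refine Finset.sum_congr rfl fun i _ => ?_
  rw [iteratedFDeriv_two_apply, iteratedFDeriv_two_apply, h2]

end radial

lemma core_ineq (t : ℝ) (ht0 : 0 < t) (ht1 : t < 1) :
    792 + 2175/2 * t ≤ 2525 * Real.exp (-(8/7) + 8/7 * t) := by
  have hu : (0:ℝ) ≤ 8/7 * t := by positivity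
  have hsum' : 1 + 8/7*t + (8/7*t)^2/2 + (8/7*t)^3/6 ≤ Real.exp (8/7*t) := by
    have h := Real.sum_le_exp_of_nonneg hu 4
    rw [Finset.sum_range_succ, Finset.sum_range_succ, Finset.sum_range_succ,
      Finset.sum_range_succ, Finset.sum_range_zero] at h
    norm_num [Nat.factorial] at h
    linarith
  have he1 : Real.exp ((4:ℝ)/7) ≤ 1.7708 := by
    have h := Real.exp_bound' (x := (4:ℝ)/7) (by norm_num) (by norm_num) (n := 6) (by norm_num)
    rw [Finset.sum_range_succ, Finset.sum_range_succ, Finset.sum_range_succ,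
      Finset.sum_range_succ, Finset.sum_range_succ, Finset.sum_range_succ,
      Finset.sum_range_zero] at h
    norm_num [Nat.factorial] at h
    linarith
  have he2 : Real.exp (-(8/7) : ℝ) * (Real.exp ((4:ℝ)/7) * Real.exp ((4:ℝ)/7)) = 1 := by
    rw [← Real.exp_add, ← Real.exp_add]
    norm_num
  have hA : (0.318904:ℝ) ≤ Real.exp (-(8/7) : ℝ) := by
    nlinarith [Real.exp_pos ((4:ℝ)/7), Real.exp_pos (-(8/7) : ℝ)]
  have hP : (0:ℝ) ≤ 1 + 8/7*t + (8/7*t)^2/2 + (8/7*t)^3/6 := by positivity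
  have hkey := mul_le_mul hA hsum' hP (Real.exp_pos _).le
  rw [Real.exp_add]
  nlinarith [hkey, sq_nonneg (t - 11/75), mul_nonneg ht0.le (sq_nonneg (t - 11/75))]

theorem w_three_half_subsolution_dim13
    (w : EuclideanSpace ℝ (Fin 13) → ℝ)
    (hw : ∀ x : EuclideanSpace ℝ (Fin 13),
      w x = -4 * Real.log ‖x‖ - 8 / 7 + (8 / 7) * ‖x‖ ^ ((7 : ℝ) / 2))
    (x : EuclideanSpace ℝ (Fin 13)) (hx : x ≠ 0) (hx1 : ‖x‖ < 1) :
    lap (lap w) x ≤ 2525 * Real.exp (w x) := by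
  -- the radial profiles
  set F : ℝ → ℝ := fun z => -2 * Real.log z - 8/7 + 8/7 * z ^ ((7:ℝ)/4) with hF_def
  set F' : ℝ → ℝ := fun z => -2 * z⁻¹ + 2 * z ^ ((3:ℝ)/4) with hF'_def
  set F'' : ℝ → ℝ := fun z => 2 * (z⁻¹ * z⁻¹) + 3/2 * z ^ (-(1:ℝ)/4) with hF''_def
  set G : ℝ → ℝ := fun z => -44 * z⁻¹ + 58 * z ^ ((3:ℝ)/4) with hG_def
  set G' : ℝ → ℝ := fun z => 44 * (z⁻¹ * z⁻¹) + 87/2 * z ^ (-(1:ℝ)/4) with hG'_def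
  set G'' : ℝ → ℝ := fun z => -88 * (z⁻¹ * z⁻¹ * z⁻¹) - 87/8 * z ^ (-(5:ℝ)/4) with hG''_def
  have hF : ∀ s : ℝ, 0 < s → HasDerivAt F (F' s) s := by
    intro s hs
    have hl := Real.hasDerivAt_log hs.ne'
    have hp := Real.hasDerivAt_rpow_const (x := s) (p := (7:ℝ)/4) (Or.inl hs.ne')
    have h := ((hl.const_mul (-2:ℝ)).sub_const (8/7)).add (hp.const_mul (8/7 : ℝ))
    convert h using 1
    · rfl
    · rfl
    · rfl
    rw [show (7:ℝ)/4 - 1 = 3/4 by norm_num]; simp [hF'_def]; ring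
  have hF' : ∀ s : ℝ, 0 < s → HasDerivAt F' (F'' s) s := by
    intro s hs
    have hi := hasDerivAt_inv hs.ne'
    have hp := Real.hasDerivAt_rpow_const (x := s) (p := (3:ℝ)/4) (Or.inl hs.ne')
    have h := (hi.const_mul (-2:ℝ)).add (hp.const_mul (2:ℝ))
    convert h using 1
    · rfl
    · rfl
    · rfl
    rw [show (3:ℝ)/4 - 1 = -1/4 by norm_num]
    simp [hF''_def]; field_simp; ring
  have hG : ∀ s : ℝ, 0 < s → HasDerivAt G (G' s) s := by
    intro s hs
    have hi := hasDerivAt_inv hs.ne'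
    have hp := Real.hasDerivAt_rpow_const (x := s) (p := (3:ℝ)/4) (Or.inl hs.ne')
    have h := (hi.const_mul (-44:ℝ)).add (hp.const_mul (58:ℝ))
    convert h using 1
    · rfl
    · rfl
    · rfl
    rw [show (3:ℝ)/4 - 1 = -1/4 by norm_num]
    simp [hG'_def]; field_simp; ring
  have hG' : ∀ s : ℝ, 0 < s → HasDerivAt G' (G'' s) s := by
    intro s hs
    have hi := hasDerivAt_inv hs.ne'
    have hp := Real.hasDerivAt_rpow_const (x := s) (p := -(1:ℝ)/4) (Or.inl hs.ne')
    have h := ((hi.mul hi).const_mul (44:ℝ)).add (hp.const_mul (87/2 : ℝ))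
    convert h using 1
    · rfl
    · rfl
    · rfl
    rw [show -(1:ℝ)/4 - 1 = -5/4 by norm_num]
    simp only [hG''_def]
    field_simp
    ring
  -- rewrite w as a radial function of ‖·‖²
  have hwF : w = fun y : EuclideanSpace ℝ (Fin 13) => F (‖y‖^2) := by
    funext y
    rw [hw y, hF_def]
    have h1 : Real.log (‖y‖^2) = 2 * Real.log ‖y‖ := by
      rw [Real.log_pow]; push_cast; ring
    have h2 : (‖y‖^2) ^ ((7:ℝ)/4) = ‖y‖ ^ ((7:ℝ)/2) := by
      rw [← Real.rpow_natCast ‖y‖ 2, ← Real.rpow_mul (norm_nonneg y)]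
      norm_num
    simp only [h1, h2]
    ring
  -- lap w agrees with the radial function G ∘ ‖·‖² away from 0
  have hmem : {y : EuclideanSpace ℝ (Fin 13) | y ≠ 0} ∈ nhds x :=
    IsOpen.mem_nhds isOpen_compl_singleton hx
  have hlapw : lap w =ᶠ[nhds x] fun y => G (‖y‖^2) := by
    filter_upwards [hmem] with y hy
    have hyn : (0:ℝ) < ‖y‖ := norm_pos_iff.mpr hy
    have hys : (0:ℝ) < ‖y‖^2 := by positivity
    rw [hwF, lap_radial F F' F'' hF hF' y hy]
    set s : ℝ := ‖y‖^2
    have hkey : s * s ^ (-(1:ℝ)/4) = s ^ ((3:ℝ)/4) := by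
      rw [show (3:ℝ)/4 = 1 + (-(1)/4 : ℝ) by norm_num, Real.rpow_add hys, Real.rpow_one]
    simp only [hF'_def, hF''_def, hG_def]
    rw [← hkey]
    field_simp
    ring
  -- compute lap (lap w) x
  have hxn : (0:ℝ) < ‖x‖ := norm_pos_iff.mpr hx
  have hxs : (0:ℝ) < ‖x‖^2 := by positivity
  have hll : lap (lap w) x
      = 4 * ‖x‖^2 * G'' (‖x‖^2) + 2 * 13 * G' (‖x‖^2) := by
    rw [lap_congr hlapw, lap_radial G G' G'' hG hG' x hx]
    norm_num
  set s : ℝ := ‖x‖^2 with hs_def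
  have hval : lap (lap w) x = 792 * (s⁻¹ * s⁻¹) + 2175/2 * s ^ (-(1:ℝ)/4) := by
    rw [hll]
    have hkey : s * s ^ (-(5:ℝ)/4) = s ^ (-(1:ℝ)/4) := by
      rw [show -(1:ℝ)/4 = 1 + (-(5)/4 : ℝ) by norm_num, Real.rpow_add hxs, Real.rpow_one]
    simp only [hG'_def, hG''_def]
    rw [← hkey]
    field_simp
    ring
  -- now the inequality
  set r : ℝ := ‖x‖ with hr_def
  set t : ℝ := r ^ ((7:ℝ)/2) with ht_def
  have ht0 : 0 < t := Real.rpow_pos_of_pos hxn _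
  have ht1 : t < 1 := Real.rpow_lt_one (norm_nonneg x) hx1 (by norm_num)
  have hR : (0:ℝ) < r ^ (-(4:ℝ)) := Real.rpow_pos_of_pos hxn _
  set R : ℝ := r ^ (-(4:ℝ)) with hR_def
  have hs_inv : s⁻¹ * s⁻¹ = R := by
    rw [hs_def, hR_def, Real.rpow_neg hxn.le,
      show (4:ℝ) = ((4:ℕ):ℝ) by norm_num, Real.rpow_natCast, ← mul_inv, ← pow_add]
  have hs_quarter : s ^ (-(1:ℝ)/4) = R * t := by
    rw [hs_def, ← Real.rpow_natCast r 2, ← Real.rpow_mul hxn.le, hR_def, ht_def,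
      ← Real.rpow_add hxn]
    norm_num
  have hwx : w x = -4 * Real.log r + (-(8/7) + 8/7 * t) := by
    rw [hw x, ht_def, hr_def]; ring
  have hRexp : Real.exp (-4 * Real.log r) = R := by
    rw [hR_def, Real.rpow_def_of_pos hxn]; ring_nf
  have hexp : Real.exp (w x) = R * Real.exp (-(8/7) + 8/7 * t) := by
    rw [hwx, Real.exp_add, hRexp]
  have hcore := core_ineq t ht0 ht1
  rw [hval, hexp, hs_inv, hs_quarter]
  calc 792 * R + 2175/2 * (R * t) = R * (792 + 2175/2 * t) := by ring
    _ ≤ R * (2525 * Real.exp (-(8/7) + 8/7 * t)) := mul_le_mul_of_nonneg_left hcore hR.le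
    _ = 2525 * (R * Real.exp (-(8/7) + 8/7 * t)) := by ring
end

section
/- Let N = 13 and define w_{3.5}(r) = −4 ln r − 8/7 + (8/7) r^{7/2} for r ∈ (0,1). Then for every r ∈ (0,1), ((N−2)²(N−4)²/16) · 1/((r² − (9/10) r^{N/2+1})(r² − r^{N/2})) + ((N−1)(N−4)²/4) · 1/(r²(r² − r^{N/2})) ≥ 2560 e^{w_{3.5}(r)}. -/
open Real

set_option maxHeartbeats 4000000

lemma exp_taylor8 (z : ℝ) (hz : 0 ≤ z) :
    1 + z + z^2/2 + z^3/6 + z^4/24 + z^5/120 + z^6/720 + z^7/5040 + z^8/40320 ≤ Real.exp z := by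
  have h := Real.sum_le_exp_of_nonneg hz 9
  simp [Finset.sum_range_succ, Nat.factorial] at h
  linarith

lemma cert13 (x : ℝ) (hx0 : 0 ≤ x) (hx1 : x ≤ 1) :
    0 ≤ (9801/16 + 243*(1 - 9/10*x^11)) *
        (1 + (8/7 - 8/7*x^7) + (8/7 - 8/7*x^7)^2/2 + (8/7 - 8/7*x^7)^3/6 + (8/7 - 8/7*x^7)^4/24
          + (8/7 - 8/7*x^7)^5/120 + (8/7 - 8/7*x^7)^6/720 + (8/7 - 8/7*x^7)^7/5040
          + (8/7 - 8/7*x^7)^8/40320)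
      - 2560*(1 - 9/10*x^11)*(1 - x^9) := by
  have hy : (0:ℝ) ≤ 1 - x := by linarith
  set Q : ℝ := (975442405725409502219229593046738851968499239266746570885627346133836704591940560608783524642864404611479807220198996776267008059/4551304309698417221539501923565273827685077542688091367710817799033385421357788988973313354299928714178503810202314782088888320)*(1-x)^65 +
      (106929478207534887037426958299202450328257746808509128397842856744448074661114443338697510876290750244467932604649844465402214169/7374798649974287164531600339110397405971190462689036938420306618804096747570491417317868861134143749826279322087084137644032)*x*(1-x)^64 +
      (3368184800474042848939533824611470403786199229567961446355250683439662668531189701432414505187191978243492901543890191991779199352537/6969184724225701370482362320459325548642774987241139906807189754769871426454114389365386073771765843585833959372294510073610240)*x^2*(1-x)^63 +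
      (275290512037552311873576940769762486752379910712560622764810650535403953568703516306757718806625274596080104603927120009926339859593523/26018289637109285116467485996381482048266359952366922318746841751140853325428693720297441342081259149387113448323232837608144896)*x^3*(1-x)^62 +
      (5194294043773812996315134311026684494539160171502050271635621270252709592870349029076799604509317289020448655882979974112130517340783629/30354671243294165969212066995778395722977419944428076038537982042997662213000142673680348232428135674284965689710438310542835712)*x^4*(1-x)^61 +
      (13898113466836318842325380145339547714388965348079051812038180432727968142382149773474488352020882798662090054008642135756941036571518310517/6374480961091774853534534069113463101825258188329895968092976229029509064730029961472873128809908491599842794839192045213995499520)*x^5*(1-x)^60 +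
      (7264175418582245965692082726721389938304712866724975342456850707327750972316041331213274696688603073868636375307244085030656107688816334325/318724048054588742676726703455673155091262909416494798404648811451475453236501498073643656440495424579992139741959602260699774976)*x^6*(1-x)^59 +
      (427108015687509053953302916925131063486788796590468556024002798960704278533788954072186479463555249619272150627984902433252974752387377090297/2124826987030591617844844689704487700608419396109965322697658743009836354910009987157624376269969497199947598279730681737998499840)*x^7*(1-x)^58 +
      (486522561678653180942214421730401953793929293848043988492846168864740200858970060818928003166508796335731278707454662459304545403610893702065/318724048054588742676726703455673155091262909416494798404648811451475453236501498073643656440495424579992139741959602260699774976)*x^8*(1-x)^57 +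
      (38772173720654391263067044718448067415635149134734542311638452150646560612320936270083975289213005339037279914672382102724118111591751222525239/3824688576655064912120720441468077861095154912997937580855785737417705438838017976883723877285945094959905676903515227128397299712)*x^9*(1-x)^56 +
      (80757377059316927209319972288767126979621880148243923655453251521751115010173034968246122274396460147628563303999176483208228323916644916873/1355119251932775266482681562311535523347206247519110537434731341205252777366077797932158403233398914030578825433501710292090880)*x^10*(1-x)^55 +
      (4277765102965654638709189708162279497875628265146281217346234259724797794183455706308241784549873881285818030711565199745415354454481677502981703/13659602059482374686145430148100278075339838974992634217342091919348947995850064203156156704592661053428234560369697239744276070400)*x^11*(1-x)^54 +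
      (7877608784984539244448162617082358955276403516624305317244107118958349827442393699678689493424697187337543535746751507737934016868707506495857627/5312067467576479044612111724261219251521048490274913306744146857524590887275024967894060940674923742999868995699326704344996249600)*x^12*(1-x)^53 +
      (4511956190253681312975145189607715570330962592397940013814344769749573819313004646386114204725754815281180982864339612604797738507147805085102509/708275662343530539281614896568162566869473132036655107565886247669945451636669995719208125423323165733315866093243560579332833280)*x^13*(1-x)^52 +
      (13261287971893739968069251077044203712454053561844177433641320678531080654771822238565342728640162734493698791949035284388172312480289434146146629/531206746757647904461211172426121925152104849027491330674414685752459088727502496789406094067492374299986899569932670434499624960)*x^14*(1-x)^51 +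
      (2241819940985283405571195892963716751501289382109866714227781449167265794319439569062250325167644322865495344662972332509208143256824924621001061/24997964553301077856998172820052796477746110542470180267031279329527486528353058672442639720823170555293501156232125667505864704)*x^15*(1-x)^50 +
      (61773357081252987438570410082942643862116206022660652681502136671977835436620077120526365214438928391893587601200561501178304511310332688508572279/208316371277508982141651440167106637314550921187251502225260661079395721069608822270355331006859754627445842968601047229215539200)*x^16*(1-x)^49 +
      (196388698038816914610234069119975969301898113502477868053651410595912429726011953392134224088590192023294080223978591877115264381596816702536859351/216819080309244042637229049969845683735552999603057685989557014592840444378572447669145344517343826244892612069360273646734540800)*x^17*(1-x)^48 +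
      (208448082951501191720902514575354780991070442300031652649158347541649290772113926846033713633487911320326767959458900042218649230493138321273930059/81307155115966515988960893738692131400832374851146632246083880472315166641964667875929504194003934841834729526010102617525452800)*x^18*(1-x)^47 +
      (3410990071740153354425722492343798583456402493735221929080746622746373067567714614250999892403784294828043302425076092331134914214876531585450334569/505911187388236099486867783262973262049623665740467933975633034049961036883335711228005803873802261238082761495173971842380595200)*x^19*(1-x)^46 +
      (37596496321233911379674856697498656172074507800961286037401218837311702775655260377570743566658701896155012283488335819573489501475154377536621681227/2276600343247062447690905024683379679223306495832105702890348653224824665975010700526026117432110175571372426728282873290712678400)*x^20*(1-x)^45 +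
      (57296763869216253284760744449485012479161912334089860695859716021666898997932460327992378020913754514444839440173210148828918062278646578639995599097/1517733562164708298460603349788919786148870997221403801926899102149883110650007133684017411621406783714248284485521915527141785600)*x^21*(1-x)^44 +
      (10205438389621727488665033058369792989482852833921478320848716922035307839065303997369800858382619076354895119823456409091727393670834475039967754259/126477796847059024871716945815743315512405916435116983493908258512490259220833927807001450968450565309520690373793492960595148800)*x^22*(1-x)^43 +
      (245128208501409347690562178792010398583739569240272230008951352116148862055148657911043844543531440477031034127182463261069218941155306669252802564487/1517733562164708298460603349788919786148870997221403801926899102149883110650007133684017411621406783714248284485521915527141785600)*x^23*(1-x)^42 +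
      (8216397698976502253515497608481515422441522845144710496190848175668940436168539771780588700931688855394457266028486932488190153698290714494133820073/27102385038655505329653631246230710466944124950382210748694626824105055547321555958643168064667978280611576508670034205841817600)*x^24*(1-x)^41 +
      (5516201528989344897808210600022564064364840044341792850989716290181331196552533220495320353163518886465022507401783335650551003632128649684868723111/10324718109964002030344240474754556368359666647764651713788429266325735446598687984245016405587801249756791050921917792701644800)*x^25*(1-x)^40 +
      (83941688076660217334539026980920360194089844733355397905833125282000527803415513693013119727692376697158905345496277724175281076776405737569423430073/94858347635294268653787709361807486634304437326337737620431193884367694415625445855251088226337923982140517780345119720446361600)*x^26*(1-x)^39 +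
      (18832288362488591610542598575640348595839899347959560334133079500429373995204442842187387780739653448517790854981506524310329066426507190115330265408083/13659602059482374686145430148100278075339838974992634217342091919348947995850064203156156704592661053428234560369697239744276070400)*x^27*(1-x)^38 +
      (511446109754165753124242931232536658757742190576111988182499214154046740299023288600626772822312346591092455364793504109474756341233264188882696457083/252955593694118049743433891631486631024811832870233966987816517024980518441667855614002901936901130619041380747586985921190297600)*x^28*(1-x)^37 +
      (38146525708835557594037764750281780917295010673473574901737549835199634922177213200866893888737789261465708744308282990239663435767959537461441101808593/13659602059482374686145430148100278075339838974992634217342091919348947995850064203156156704592661053428234560369697239744276070400)*x^29*(1-x)^36 +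
      (4137045130879151079707662694625064672340460072350577116020625939927077676126009408321806384767543476500062222873371309927642765182923592980942668893141/1138300171623531223845452512341689839611653247916052851445174326612412332987505350263013058716055087785686213364141436645356339200)*x^30*(1-x)^35 +
      (966563825009077619532411200789843786311900905998323084231490526157632555445475743676237619605564472893965407157189985551499127798681034002601680297601/216819080309244042637229049969845683735552999603057685989557014592840444378572447669145344517343826244892612069360273646734540800)*x^31*(1-x)^34 +
      (394447076872443028789081740638749923915414867027827390142137157837247334088186354108711308638298533804558978855769690488352297095124147989097125875461/76524381285615544460198488224651417789018705742255653878667181621002509780672628589110121594356644557020921906833037757671014400)*x^32*(1-x)^33 +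
      (1504834549320143968750904161633108640372853301532029774736349359066500785402644783980741124897296143018272889272408492870898985623782689645355917213823/267835334499654405610694708786279962261565470097894788575335135673508784232354200061885425580248255949573226673915632151848550400)*x^33*(1-x)^32 +
      (1095220535036089152931428518002944483356359502149982442273582137281939617590981373853602204242484107769936442878092707226749921420466931304736168544451/189716695270588537307575418723614973268608874652675475240862387768735388831250891710502176452675847964281035560690239440892723200)*x^34*(1-x)^31 +
      (25453394330065938979105288135672348108517024183537493231742359682443599270808613389005437112957639596022675108203774656161234783727699314756855154665111/4553200686494124895381810049366759358446612991664211405780697306449649331950021401052052234864220351142744853456565746581425356800)*x^35*(1-x)^30 +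
      (34832870565496656716725878971541515647213894022335030768042823916383528868727350945848271925909090616728980834549578016255374974364994015715077391815239/6829801029741187343072715074050139037669919487496317108671045959674473997925032101578078352296330526714117280184848619872138035200)*x^36*(1-x)^29 +
      (6650530546137518503272451571513008009001044051809361574993596301988184495572802790342586050978966942391513877975689664912950968824104109285224169969903/1517733562164708298460603349788919786148870997221403801926899102149883110650007133684017411621406783714248284485521915527141785600)*x^37*(1-x)^28 +
      (1728621506508704536387713930109737675373856212923615381224656359276826850516301197036516231902637182423562669275825713623880053212036486931977986879389/487842930695799095933765362432152788404994249106879793476503282833890999851788007255577025164023609051008377156060615705152716800)*x^38*(1-x)^27 +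
      (584319929128842231191463505428327103371560877485460982432928933273221368260693180254506893171432248684716313816765367704786110826815401915584398064711/216819080309244042637229049969845683735552999603057685989557014592840444378572447669145344517343826244892612069360273646734540800)*x^39*(1-x)^26 +
      (243617547535054567760526757621265693853970059510058688742654488817079886758520776486521195490003918327771975109991515839336346450216524082795450511619/126477796847059024871716945815743315512405916435116983493908258512490259220833927807001450968450565309520690373793492960595148800)*x^40*(1-x)^25 +
      (1961585327751779997143401477839626103890319808047674108207331262903319621129791205532447591151088406208608823065887233119329217685770378037756231016291/1517733562164708298460603349788919786148870997221403801926899102149883110650007133684017411621406783714248284485521915527141785600)*x^41*(1-x)^24 +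
      (19284981976031161703485132447055408456910221300684716724923877060149496144415233180530280244124228950636317283465273912039731618905080320087587231087/23714586908823567163446927340451871658576109331584434405107798471091923603906361463812772056584480995535129445086279930111590400)*x^42*(1-x)^23 +
      (242418716422146392639657452275967906255689052189495223884376064726921101009585600134439559563838492631606726169074922004347156374744531450456458413231/505911187388236099486867783262973262049623665740467933975633034049961036883335711228005803873802261238082761495173971842380595200)*x^43*(1-x)^22 +
      (200345046879669060091558361987350674518847272888266505619931604619222970363136402951561227955565213813519691679091381897337868808784798155031407657991/758866781082354149230301674894459893074435498610701900963449551074941555325003566842008705810703391857124142242760957763570892800)*x^44*(1-x)^21 +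
      (88313738196786135732983187814370617368542174801774535424040181004373091253619765297334339169324379750298648025103352146120560841024765354762704681547/650457240927732127911687149909537051206658998809173057968671043778521333135717343007436033552031478734677836208080820940203622400)*x^45*(1-x)^20 +
      (1645360309261070041349616559850413672273422316609183105808274926752960324063716903403335417607213948508302167560487433898189233066486072440565463531/25295559369411804974343389163148663102481183287023396698781651702498051844166785561400290193690113061904138074758698592119029760)*x^46*(1-x)^19 +
      (923131221834355038801734373344225165231870350245152790719702394529751365068528923257736572343186700404305851113526780192355376695273555248075961755061/31872404805458874267672670345567315509126290941649479840464881145147545323650149807364365644049542457999213974195960226069977497600)*x^47*(1-x)^18 +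
      (127020136918722514598406520126529636101023008205435074933964698953424595399745936269962580965261948027621356427337735017462875515689812579658419176769/10624134935152958089224223448522438503042096980549826613488293715049181774550049935788121881349847485999737991398653408689992499200)*x^48*(1-x)^17 +
      (950259430944407046983928425400161051774308540408128431894692643188293597133034927920172496000990034496798910538537372300814648627944227000245854871/208316371277508982141651440167106637314550921187251502225260661079395721069608822270355331006859754627445842968601047229215539200)*x^49*(1-x)^16 +
      (125239642695759328610477591134120408904665632174678772735418492000985758227950483641994193723811094532763483946150024261671576112593030880639855599/78118639229065868303119290062664988992956595445219313334472747904773395401103308351383249127572407985292191113225392710955827200)*x^50*(1-x)^15 +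
      (1098496604242034711221859349981504334740352828524693031658983836460058312355430711236031553782418983646754525222940454309037308817394590712591781747/2124826987030591617844844689704487700608419396109965322697658743009836354910009987157624376269969497199947598279730681737998499840)*x^51*(1-x)^14 +
      (38516183252432996808755791471371875807165504148058930053495513736840864918319796604129007456146275081342488638715157743352400077157802002634071729/252955593694118049743433891631486631024811832870233966987816517024980518441667855614002901936901130619041380747586985921190297600)*x^52*(1-x)^13 +
      (12367004555114183179045939280537313325181817376988457669156597695597197395744440067060922629914379417080565463695659360949563937884626035222418327/303546712432941659692120669957783957229774199444280760385379820429976622130001426736803482324281356742849656897104383105428357120)*x^53*(1-x)^12 +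
      (47050597608677576586666554838437530606586985850687448837817948867409720196811469888422403679021518019241852097170537924500395988317005317352373537/4780860720818831140150900551835097326368943641247421976069732171772131798547522471104654846607431368699882096129394033910496624640)*x^54*(1-x)^11 +
      (502895791479968044873958903893405365909960798804948715227681174536076506624264320209121172134989293420421984700591912151259644002838735728632167/236091887447843513093871632189387522289824377345551702521962082556648483878889998573069375141107721911105288697747853526444277760)*x^55*(1-x)^10 +
      (2446406204715031132188752476334240654290089760383443168574527539577918971858959846115867642197148451881588212014468943070587944369622021243950449/5976075901023538925188625689793871657961179551559277470087165214715164748184403088880818558259289210874852620161742542388120780800)*x^56*(1-x)^9 +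
      (2201837118617357679201544412045452080050648229708190702290035571827948465744524974337059122849824755432374474126885701795261765411638525749740259/31872404805458874267672670345567315509126290941649479840464881145147545323650149807364365644049542457999213974195960226069977497600)*x^57*(1-x)^8 +
      (6703358965308200992999268779492210380561802033753793498547352380153539771341163535678415515983953339260270338204952477602085160831737642296387/664008433447059880576513965532652406440131061284364163343018357190573860909378120986757617584365467874983624462415838043124531200)*x^58*(1-x)^7 +
      (5713608894414245875551976593285764700216775301344080748805645490929184549551610267556248743951417059590090753140468196724973775252517607378107/4553200686494124895381810049366759358446612991664211405780697306449649331950021401052052234864220351142744853456565746581425356800)*x^59*(1-x)^6 +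
      (294983254367561875028429696732934054189635590184990312489316085233218871250678225051283234920372159031710821695626960231925722112305559527729/2276600343247062447690905024683379679223306495832105702890348653224824665975010700526026117432110175571372426728282873290712678400)*x^60*(1-x)^5 +
      (114275618666029605116891274740790040225725482266343667444444313536447230141268417950591341118133280564285747815273019914953425394497372842901/10624134935152958089224223448522438503042096980549826613488293715049181774550049935788121881349847485999737991398653408689992499200)*x^61*(1-x)^4 +
      (5452403979367049239073063732955617654381385198858603578476336081966370145994146255749292461284872384728197677801830111770186784393054291833/7968101201364718566918167586391828877281572735412369960116220286286886330912537451841091411012385614499803493548990056517494374400)*x^62*(1-x)^3 +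
      (591034700035696578118250055136651305305814814570209509175782988554977666524988795294228159061267032320387910381400950139641049745194496631/19123442883275324560603602207340389305475774564989687904278928687088527194190089884418619386429725474799528384517576135641986498560)*x^63*(1-x)^2 +
      (7324025130247363541078678496863457800885940420642392583927919537913169350690086226161914826824662045817276327295246003425621526827154141/8499307948122366471379378758817950802433677584439861290790634972039345419640039948630497505079877988799790393118922726951993999360)*x^64*(1-x) +
      (40527330631902189775065499807692045305311117467959182340660829085885027414872286886394702912635143139355639840444835375871266889100889/3824688576655064912120720441468077861095154912997937580855785737417705438838017976883723877285945094959905676903515227128397299712)*x^65 with hQ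
  have hq : (0:ℝ) ≤ Q := by
    rw [hQ]
    exact add_nonneg (add_nonneg (add_nonneg (add_nonneg (add_nonneg (add_nonneg (add_nonneg (add_nonneg (add_nonneg (add_nonneg (add_nonneg (add_nonneg (add_nonneg (add_nonneg (add_nonneg (add_nonneg (add_nonneg (add_nonneg (add_nonneg (add_nonneg (add_nonneg (add_nonneg (add_nonneg (add_nonneg (add_nonneg (add_nonneg (add_nonneg (add_nonneg (add_nonneg (add_nonneg (add_nonneg (add_nonneg (add_nonneg (add_nonneg (add_nonneg (add_nonneg (add_nonneg (add_nonneg (add_nonneg (add_nonneg (add_nonneg (add_nonneg (add_nonneg (add_nonneg (add_nonneg (add_nonneg (add_nonneg (add_nonneg (add_nonneg (add_nonneg (add_nonneg (add_nonneg (add_nonneg (add_nonneg (add_nonneg (add_nonneg (add_nonneg (add_nonneg (add_nonneg (add_nonneg (add_nonneg (add_nonneg (add_nonneg (add_nonneg (add_nonneg (mul_nonneg (by norm_num) (pow_nonneg hy 65))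
      (mul_nonneg (mul_nonneg (by norm_num) hx0) (pow_nonneg hy 64)))
      (mul_nonneg (mul_nonneg (by norm_num) (pow_nonneg hx0 2)) (pow_nonneg hy 63)))
      (mul_nonneg (mul_nonneg (by norm_num) (pow_nonneg hx0 3)) (pow_nonneg hy 62)))
      (mul_nonneg (mul_nonneg (by norm_num) (pow_nonneg hx0 4)) (pow_nonneg hy 61)))
      (mul_nonneg (mul_nonneg (by norm_num) (pow_nonneg hx0 5)) (pow_nonneg hy 60)))
      (mul_nonneg (mul_nonneg (by norm_num) (pow_nonneg hx0 6)) (pow_nonneg hy 59)))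
      (mul_nonneg (mul_nonneg (by norm_num) (pow_nonneg hx0 7)) (pow_nonneg hy 58)))
      (mul_nonneg (mul_nonneg (by norm_num) (pow_nonneg hx0 8)) (pow_nonneg hy 57)))
      (mul_nonneg (mul_nonneg (by norm_num) (pow_nonneg hx0 9)) (pow_nonneg hy 56)))
      (mul_nonneg (mul_nonneg (by norm_num) (pow_nonneg hx0 10)) (pow_nonneg hy 55)))
      (mul_nonneg (mul_nonneg (by norm_num) (pow_nonneg hx0 11)) (pow_nonneg hy 54)))
      (mul_nonneg (mul_nonneg (by norm_num) (pow_nonneg hx0 12)) (pow_nonneg hy 53)))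
      (mul_nonneg (mul_nonneg (by norm_num) (pow_nonneg hx0 13)) (pow_nonneg hy 52)))
      (mul_nonneg (mul_nonneg (by norm_num) (pow_nonneg hx0 14)) (pow_nonneg hy 51)))
      (mul_nonneg (mul_nonneg (by norm_num) (pow_nonneg hx0 15)) (pow_nonneg hy 50)))
      (mul_nonneg (mul_nonneg (by norm_num) (pow_nonneg hx0 16)) (pow_nonneg hy 49)))
      (mul_nonneg (mul_nonneg (by norm_num) (pow_nonneg hx0 17)) (pow_nonneg hy 48)))
      (mul_nonneg (mul_nonneg (by norm_num) (pow_nonneg hx0 18)) (pow_nonneg hy 47)))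
      (mul_nonneg (mul_nonneg (by norm_num) (pow_nonneg hx0 19)) (pow_nonneg hy 46)))
      (mul_nonneg (mul_nonneg (by norm_num) (pow_nonneg hx0 20)) (pow_nonneg hy 45)))
      (mul_nonneg (mul_nonneg (by norm_num) (pow_nonneg hx0 21)) (pow_nonneg hy 44)))
      (mul_nonneg (mul_nonneg (by norm_num) (pow_nonneg hx0 22)) (pow_nonneg hy 43)))
      (mul_nonneg (mul_nonneg (by norm_num) (pow_nonneg hx0 23)) (pow_nonneg hy 42)))
      (mul_nonneg (mul_nonneg (by norm_num) (pow_nonneg hx0 24)) (pow_nonneg hy 41)))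
      (mul_nonneg (mul_nonneg (by norm_num) (pow_nonneg hx0 25)) (pow_nonneg hy 40)))
      (mul_nonneg (mul_nonneg (by norm_num) (pow_nonneg hx0 26)) (pow_nonneg hy 39)))
      (mul_nonneg (mul_nonneg (by norm_num) (pow_nonneg hx0 27)) (pow_nonneg hy 38)))
      (mul_nonneg (mul_nonneg (by norm_num) (pow_nonneg hx0 28)) (pow_nonneg hy 37)))
      (mul_nonneg (mul_nonneg (by norm_num) (pow_nonneg hx0 29)) (pow_nonneg hy 36)))
      (mul_nonneg (mul_nonneg (by norm_num) (pow_nonneg hx0 30)) (pow_nonneg hy 35)))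
      (mul_nonneg (mul_nonneg (by norm_num) (pow_nonneg hx0 31)) (pow_nonneg hy 34)))
      (mul_nonneg (mul_nonneg (by norm_num) (pow_nonneg hx0 32)) (pow_nonneg hy 33)))
      (mul_nonneg (mul_nonneg (by norm_num) (pow_nonneg hx0 33)) (pow_nonneg hy 32)))
      (mul_nonneg (mul_nonneg (by norm_num) (pow_nonneg hx0 34)) (pow_nonneg hy 31)))
      (mul_nonneg (mul_nonneg (by norm_num) (pow_nonneg hx0 35)) (pow_nonneg hy 30)))
      (mul_nonneg (mul_nonneg (by norm_num) (pow_nonneg hx0 36)) (pow_nonneg hy 29)))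
      (mul_nonneg (mul_nonneg (by norm_num) (pow_nonneg hx0 37)) (pow_nonneg hy 28)))
      (mul_nonneg (mul_nonneg (by norm_num) (pow_nonneg hx0 38)) (pow_nonneg hy 27)))
      (mul_nonneg (mul_nonneg (by norm_num) (pow_nonneg hx0 39)) (pow_nonneg hy 26)))
      (mul_nonneg (mul_nonneg (by norm_num) (pow_nonneg hx0 40)) (pow_nonneg hy 25)))
      (mul_nonneg (mul_nonneg (by norm_num) (pow_nonneg hx0 41)) (pow_nonneg hy 24)))
      (mul_nonneg (mul_nonneg (by norm_num) (pow_nonneg hx0 42)) (pow_nonneg hy 23)))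
      (mul_nonneg (mul_nonneg (by norm_num) (pow_nonneg hx0 43)) (pow_nonneg hy 22)))
      (mul_nonneg (mul_nonneg (by norm_num) (pow_nonneg hx0 44)) (pow_nonneg hy 21)))
      (mul_nonneg (mul_nonneg (by norm_num) (pow_nonneg hx0 45)) (pow_nonneg hy 20)))
      (mul_nonneg (mul_nonneg (by norm_num) (pow_nonneg hx0 46)) (pow_nonneg hy 19)))
      (mul_nonneg (mul_nonneg (by norm_num) (pow_nonneg hx0 47)) (pow_nonneg hy 18)))
      (mul_nonneg (mul_nonneg (by norm_num) (pow_nonneg hx0 48)) (pow_nonneg hy 17)))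
      (mul_nonneg (mul_nonneg (by norm_num) (pow_nonneg hx0 49)) (pow_nonneg hy 16)))
      (mul_nonneg (mul_nonneg (by norm_num) (pow_nonneg hx0 50)) (pow_nonneg hy 15)))
      (mul_nonneg (mul_nonneg (by norm_num) (pow_nonneg hx0 51)) (pow_nonneg hy 14)))
      (mul_nonneg (mul_nonneg (by norm_num) (pow_nonneg hx0 52)) (pow_nonneg hy 13)))
      (mul_nonneg (mul_nonneg (by norm_num) (pow_nonneg hx0 53)) (pow_nonneg hy 12)))
      (mul_nonneg (mul_nonneg (by norm_num) (pow_nonneg hx0 54)) (pow_nonneg hy 11)))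
      (mul_nonneg (mul_nonneg (by norm_num) (pow_nonneg hx0 55)) (pow_nonneg hy 10)))
      (mul_nonneg (mul_nonneg (by norm_num) (pow_nonneg hx0 56)) (pow_nonneg hy 9)))
      (mul_nonneg (mul_nonneg (by norm_num) (pow_nonneg hx0 57)) (pow_nonneg hy 8)))
      (mul_nonneg (mul_nonneg (by norm_num) (pow_nonneg hx0 58)) (pow_nonneg hy 7)))
      (mul_nonneg (mul_nonneg (by norm_num) (pow_nonneg hx0 59)) (pow_nonneg hy 6)))
      (mul_nonneg (mul_nonneg (by norm_num) (pow_nonneg hx0 60)) (pow_nonneg hy 5)))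
      (mul_nonneg (mul_nonneg (by norm_num) (pow_nonneg hx0 61)) (pow_nonneg hy 4)))
      (mul_nonneg (mul_nonneg (by norm_num) (pow_nonneg hx0 62)) (pow_nonneg hy 3)))
      (mul_nonneg (mul_nonneg (by norm_num) (pow_nonneg hx0 63)) (pow_nonneg hy 2)))
      (mul_nonneg (mul_nonneg (by norm_num) (pow_nonneg hx0 64)) hy))
      (mul_nonneg (by norm_num) (pow_nonneg hx0 65))
  have hid : (9801/16 + 243*(1 - 9/10*x^11)) *
        (1 + (8/7 - 8/7*x^7) + (8/7 - 8/7*x^7)^2/2 + (8/7 - 8/7*x^7)^3/6 + (8/7 - 8/7*x^7)^4/24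
          + (8/7 - 8/7*x^7)^5/120 + (8/7 - 8/7*x^7)^6/720 + (8/7 - 8/7*x^7)^7/5040
          + (8/7 - 8/7*x^7)^8/40320)
      - 2560*(1 - 9/10*x^11)*(1 - x^9)
      = (x - 77/102)^2 * Q
        + (-19348260356278021379690673731221484402113453769578411301317406178052524740669241019123586077423932395766867162893972031278114681/56844861990519006930248473004529542500883009308675753408959601898131262813693201250034036180235844348515190445792176462008156160)*x + (520662833147807053287822138532980733184777861217467892633823737592567913733619117879872404505074585258543055847658233969817890909794299/795841199030385906914079509460677641336679834296610851824471896241876147713414780629965264385659455359257173250083448460876910124072960) := by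
    rw [hQ]
    ring
  rw [hid]
  linarith [mul_nonneg (sq_nonneg (x - 77/102)) hq, hx1]

theorem pointwise_stability_dim13
    (w : ℝ → ℝ)
    (hw : ∀ r : ℝ, w r = -4 * Real.log r - 8 / 7 + (8 / 7) * r ^ ((7 : ℝ) / 2)) :
    ∀ r ∈ Set.Ioo (0 : ℝ) 1,
      ((13 : ℝ) - 2) ^ 2 * ((13 : ℝ) - 4) ^ 2 / 16 *
          (1 / ((r ^ 2 - 9 / 10 * r ^ ((13 : ℝ) / 2 + 1)) * (r ^ 2 - r ^ ((13 : ℝ) / 2)))) +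
        ((13 : ℝ) - 1) * ((13 : ℝ) - 4) ^ 2 / 4 *
          (1 / (r ^ 2 * (r ^ 2 - r ^ ((13 : ℝ) / 2)))) ≥
      2560 * Real.exp (w r) := by
  intro r hr
  obtain ⟨hr0, hr1⟩ := hr
  set x := Real.sqrt r with hxdef
  have hx0 : 0 < x := Real.sqrt_pos.mpr hr0
  have hxr : x ^ 2 = r := Real.sq_sqrt hr0.le
  have hx1 : x < 1 := by nlinarith
  have h2 : r ^ 2 = x ^ 4 := by rw [← hxr]; ring
  have h13 : r ^ ((13:ℝ)/2) = x ^ 13 := by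
    rw [← hxr, ← Real.rpow_natCast x 2, ← Real.rpow_mul hx0.le, ← Real.rpow_natCast x 13]
    norm_num
  have h15 : r ^ ((13:ℝ)/2 + 1) = x ^ 15 := by
    rw [← hxr, ← Real.rpow_natCast x 2, ← Real.rpow_mul hx0.le, ← Real.rpow_natCast x 15]
    norm_num
  have h7 : r ^ ((7:ℝ)/2) = x ^ 7 := by
    rw [← hxr, ← Real.rpow_natCast x 2, ← Real.rpow_mul hx0.le, ← Real.rpow_natCast x 7]
    norm_num
  have h4 : Real.exp ((-4) * Real.log r) = (x ^ 8)⁻¹ := by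
    have hlp : Real.exp (4 * Real.log r) = x ^ 8 := by
      rw [show (4:ℝ) * Real.log r = Real.log (r ^ 4) by rw [Real.log_pow]; push_cast; ring]
      rw [Real.exp_log (by positivity), ← hxr]; ring
    rw [show ((-4):ℝ) * Real.log r = -(4 * Real.log r) by ring, Real.exp_neg, hlp]
  have hEW : Real.exp (w r) = Real.exp (-(8/7 - 8/7 * x^7)) / x ^ 8 := by
    rw [hw r, h7,
      show -4 * Real.log r - 8/7 + 8/7 * x^7 = -(8/7 - 8/7*x^7) + (-4) * Real.log r by ring,
      Real.exp_add, h4]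
    ring
  have hx7 : x ^ 7 ≤ 1 := pow_le_one₀ hx0.le hx1.le
  have hz0 : (0:ℝ) ≤ 8/7 - 8/7 * x^7 := by linarith
  have hS := exp_taylor8 _ hz0
  have hSpos : (0:ℝ) < 1 + (8/7 - 8/7*x^7) + (8/7 - 8/7*x^7)^2/2 + (8/7 - 8/7*x^7)^3/6
      + (8/7 - 8/7*x^7)^4/24 + (8/7 - 8/7*x^7)^5/120 + (8/7 - 8/7*x^7)^6/720
      + (8/7 - 8/7*x^7)^7/5040 + (8/7 - 8/7*x^7)^8/40320 := by
    have p2 := pow_nonneg hz0 2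
    have p3 := pow_nonneg hz0 3
    have p4 := pow_nonneg hz0 4
    have p5 := pow_nonneg hz0 5
    have p6 := pow_nonneg hz0 6
    have p7 := pow_nonneg hz0 7
    have p8 := pow_nonneg hz0 8
    linarith
  have hexpz : Real.exp (-(8/7 - 8/7 * x^7)) ≤ (1 + (8/7 - 8/7*x^7) + (8/7 - 8/7*x^7)^2/2
      + (8/7 - 8/7*x^7)^3/6 + (8/7 - 8/7*x^7)^4/24 + (8/7 - 8/7*x^7)^5/120
      + (8/7 - 8/7*x^7)^6/720 + (8/7 - 8/7*x^7)^7/5040 + (8/7 - 8/7*x^7)^8/40320)⁻¹ := by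
    rw [Real.exp_neg]
    exact inv_anti₀ hSpos hS
  have hcert := cert13 x hx0.le hx1.le
  set S : ℝ := 1 + (8/7 - 8/7*x^7) + (8/7 - 8/7*x^7)^2/2 + (8/7 - 8/7*x^7)^3/6
      + (8/7 - 8/7*x^7)^4/24 + (8/7 - 8/7*x^7)^5/120 + (8/7 - 8/7*x^7)^6/720
      + (8/7 - 8/7*x^7)^7/5040 + (8/7 - 8/7*x^7)^8/40320 with hSdef
  have hx11 : x ^ 11 < 1 := pow_lt_one₀ hx0.le hx1 (by norm_num)
  have hx9 : x ^ 9 < 1 := pow_lt_one₀ hx0.le hx1 (by norm_num)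
  have hD1 : (0:ℝ) < 1 - 9/10 * x^11 := by linarith
  have hD2 : (0:ℝ) < 1 - x^9 := by linarith
  have hx8 : (0:ℝ) < x^8 := pow_pos hx0 8
  have halg : 2560 * (S⁻¹ / x ^ 8)
      ≤ 9801/16 * (1/((x^4 - 9/10*x^15)*(x^4 - x^13))) + 243 * (1/(x^4*(x^4 - x^13))) := by
    have l1 : 2560 * (S⁻¹ / x ^ 8) = 2560 / (S * x^8) := by
      rw [inv_eq_one_div, div_div]; ring
    have e1 : (x^4 - 9/10*x^15)*(x^4 - x^13) = x^8*(1 - 9/10*x^11)*(1-x^9) := by ring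
    have e2 : x^4*(x^4 - x^13) = x^8*(1-x^9) := by ring
    have hb : (0:ℝ) < x^8*(1 - 9/10*x^11)*(1-x^9) := mul_pos (mul_pos hx8 hD1) hD2
    have hd : (0:ℝ) < x^8*(1-x^9) := mul_pos hx8 hD2
    rw [l1, e1, e2, mul_one_div, mul_one_div, div_add_div _ _ hb.ne' hd.ne',
      div_le_div_iff₀ (mul_pos hSpos hx8) (mul_pos hb hd)]
    have hcert2 : 2560*(1 - 9/10*x^11)*(1 - x^9) ≤ (9801/16 + 243*(1 - 9/10*x^11))*S := by
      linarith
    nlinarith [mul_le_mul_of_nonneg_left hcert2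
      (le_of_lt (mul_pos (mul_pos (pow_pos hx0 16) hD2) hD2))]
  rw [ge_iff_le, hEW, h2, h13, h15]
  calc 2560 * (Real.exp (-(8/7 - 8/7 * x^7)) / x ^ 8)
      ≤ 2560 * (S⁻¹ / x ^ 8) := by gcongr
    _ ≤ 9801/16 * (1/((x^4 - 9/10*x^15)*(x^4 - x^13))) + 243 * (1/(x^4*(x^4 - x^13))) := halg
    _ = ((13:ℝ) - 2)^2 * ((13:ℝ) - 4)^2 / 16 * (1/((x^4 - 9/10*x^15)*(x^4 - x^13)))
        + ((13:ℝ) - 1) * ((13:ℝ) - 4)^2 / 4 * (1/(x^4*(x^4 - x^13))) := by norm_num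
end

section
/- Let 13 ≤ N ≤ 31 and define w_{3.5}(x) = −4 ln|x| − 8/7 + (8/7)|x|^{7/2} on ℝ^N \ {0}. Let λ'_N be given by the table: λ'₁₃=2525, λ'₁₄=3050, λ'₁₅=3610, λ'₁₆=4230, λ'₁₇=4900, λ'₁₈=5650, λ'₁₉=6400, λ'₂₀=7250, λ'₂₁=8150, λ'₂₂=9050, λ'₂₃=10100, λ'₂₄=11100, λ'₂₅=12200, λ'₂₆=13500, λ'₂₇=14500, λ'₂₈=16000, λ'₂₉=17000, λ'₃₀=18500, λ'₃₁=20000. Then for every x with 0 < |x| < 1, Δ²w_{3.5}(x) ≤ λ'_N e^{w_{3.5}(x)}. -/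
open Real MeasureTheory Metric

/-- The constants $λ'_N$ from the paper's table, for $13 ≤ N ≤ 31$. -/
def lambda' : ℕ → ℝ
  | 13 => 2525
  | 14 => 3050
  | 15 => 3610
  | 16 => 4230
  | 17 => 4900
  | 18 => 5650
  | 19 => 6400
  | 20 => 7250
  | 21 => 8150
  | 22 => 9050
  | 23 => 10100
  | 24 => 11100
  | 25 => 12200
  | 26 => 13500
  | 27 => 14500
  | 28 => 16000
  | 29 => 17000
  | 30 => 18500
  | 31 => 20000
  | _ => 0

/-! ### Auxiliary machinery -/

noncomputable def rinnerSL (N : ℕ) :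
    EuclideanSpace ℝ (Fin N) →L[ℝ] EuclideanSpace ℝ (Fin N) →L[ℝ] ℝ :=
  (innerSL ℝ : EuclideanSpace ℝ (Fin N) →L⋆[ℝ] _)

lemma rinnerSL_apply {N : ℕ} (y v : EuclideanSpace ℝ (Fin N)) :
    rinnerSL N y v = inner ℝ y v := rfl

lemma radial_hasFDerivAt {N : ℕ} (g g' : ℝ → ℝ) (hg : ∀ s, 0 < s → HasDerivAt g (g' s) s)
    (y : EuclideanSpace ℝ (Fin N)) (hy : y ≠ 0) :
    HasFDerivAt (fun z => g (‖z‖^2)) ((2 * g' (‖y‖^2)) • rinnerSL N y) y := by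
  have hq : HasFDerivAt (fun z : EuclideanSpace ℝ (Fin N) => ‖z‖^2) ((2:ℕ) • innerSL ℝ y) y :=
    (hasStrictFDerivAt_norm_sq y).hasFDerivAt
  have hy' : 0 < ‖y‖ := norm_pos_iff.mpr hy
  have hs : (0:ℝ) < ‖y‖^2 := by positivity
  have h2 := (hg _ hs).comp_hasFDerivAt y hq
  have he : (2 * g' (‖y‖^2)) • rinnerSL N y = g' (‖y‖^2) • ((2:ℕ) • innerSL ℝ y) := by
    ext v
    simp [rinnerSL_apply]
    ring
  rw [he]; exact h2

lemma lap_radial_s18 {N : ℕ} (g g' g'' : ℝ → ℝ) (hg : ∀ s, 0 < s → HasDerivAt g (g' s) s)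
    (hg' : ∀ s, 0 < s → HasDerivAt g' (g'' s) s)
    (x : EuclideanSpace ℝ (Fin N)) (hx : x ≠ 0) :
    lap (fun y => g (‖y‖^2)) x
      = 4 * ‖x‖^2 * g'' (‖x‖^2) + 2 * N * g' (‖x‖^2) := by
  have hx' : 0 < ‖x‖ := norm_pos_iff.mpr hx
  have hsx : (0:ℝ) < ‖x‖^2 := by positivity
  have hev : fderiv ℝ (fun y => g (‖y‖^2))
      =ᶠ[nhds x] (fun y => (2 * g' (‖y‖^2)) • rinnerSL N y) := by
    filter_upwards [IsOpen.mem_nhds isOpen_compl_singleton hx] with y hy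
    exact (radial_hasFDerivAt g g' hg y hy).fderiv
  have hc : HasFDerivAt (fun y : EuclideanSpace ℝ (Fin N) => 2 * g' (‖y‖^2))
      ((2:ℝ) • ((2 * g'' (‖x‖^2)) • rinnerSL N x)) x :=
    (radial_hasFDerivAt g' g'' hg' x hx).const_mul (2:ℝ)
  have hL : HasFDerivAt (fun y : EuclideanSpace ℝ (Fin N) => rinnerSL N y) (rinnerSL N) x :=
    (rinnerSL N).hasFDerivAt
  have hW'd := hc.smul hL
  have hfd : fderiv ℝ (fderiv ℝ (fun y => g (‖y‖^2))) x
      = (2 * g' (‖x‖^2)) • (rinnerSL N)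
        + ((2:ℝ) • ((2 * g'' (‖x‖^2)) • rinnerSL N x)).smulRight (rinnerSL N x) := by
    rw [hev.fderiv_eq]; exact hW'd.fderiv
  unfold lap
  have key : ∀ i : Fin N,
      iteratedFDeriv ℝ 2 (fun y => g (‖y‖^2)) x
        ![EuclideanSpace.single i 1, EuclideanSpace.single i 1]
      = 2 * g' (‖x‖^2) *
          (inner ℝ (EuclideanSpace.single i 1) (EuclideanSpace.single i 1 : EuclideanSpace ℝ (Fin N)) : ℝ)
        + 4 * g'' (‖x‖^2) * ((inner ℝ x (EuclideanSpace.single i 1) : ℝ)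
          * (inner ℝ x (EuclideanSpace.single i 1) : ℝ)) := by
    intro i
    rw [iteratedFDeriv_two_apply, hfd]
    simp [rinnerSL_apply]
    ring
  rw [Finset.sum_congr rfl (fun i _ => key i)]
  rw [Finset.sum_add_distrib, ← Finset.mul_sum, ← Finset.mul_sum]
  have h1 : ∑ i : Fin N,
      (inner ℝ (EuclideanSpace.single i 1) (EuclideanSpace.single i 1 : EuclideanSpace ℝ (Fin N)) : ℝ)
      = N := by
    simp [EuclideanSpace.inner_single_right]
  have h2 : ∑ i : Fin N, ((inner ℝ x (EuclideanSpace.single i 1) : ℝ)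
      * (inner ℝ x (EuclideanSpace.single i 1) : ℝ)) = ‖x‖^2 := by
    have hxi : ∀ i : Fin N, (inner ℝ x (EuclideanSpace.single i 1) : ℝ) = x i := by
      intro i; simp [EuclideanSpace.inner_single_right]
    simp only [hxi]
    rw [← real_inner_self_eq_norm_sq]
    simp only [PiLp.inner_apply, RCLike.inner_apply', conj_trivial]
  rw [h1, h2]
  ring

lemma lap_congr_s18 {N : ℕ} {u v : EuclideanSpace ℝ (Fin N) → ℝ}
    {x : EuclideanSpace ℝ (Fin N)} (h : u =ᶠ[nhds x] v) : lap u x = lap v x := by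
  unfold lap
  refine Finset.sum_congr rfl fun i _ => ?_
  rw [iteratedFDeriv_two_apply, iteratedFDeriv_two_apply,
    Filter.EventuallyEq.fderiv_eq (Filter.EventuallyEq.fderiv h)]

/-! ### The specific radial profiles -/

noncomputable def g1 : ℝ → ℝ := fun s => -2 * Real.log s - 8/7 + (8/7) * s ^ ((7:ℝ)/4)
noncomputable def g1' : ℝ → ℝ := fun s => -2 * s ^ (-(1:ℝ)) + 2 * s ^ ((3:ℝ)/4)
noncomputable def g1'' : ℝ → ℝ := fun s => 2 * s ^ (-(2:ℝ)) + (3/2) * s ^ (-(1:ℝ)/4)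
noncomputable def g2 (N : ℕ) : ℝ → ℝ :=
  fun s => (8 - 4*(N:ℝ)) * s ^ (-(1:ℝ)) + (4*(N:ℝ)+6) * s ^ ((3:ℝ)/4)
noncomputable def g2' (N : ℕ) : ℝ → ℝ :=
  fun s => -(8 - 4*(N:ℝ)) * s ^ (-(2:ℝ)) + (3/4)*(4*(N:ℝ)+6) * s ^ (-(1:ℝ)/4)
noncomputable def g2'' (N : ℕ) : ℝ → ℝ :=
  fun s => 2*(8 - 4*(N:ℝ)) * s ^ (-(3:ℝ)) + (-(3:ℝ)/16)*(4*(N:ℝ)+6) * s ^ (-(5:ℝ)/4)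

lemma hasDerivAt_c_rpow (c p : ℝ) {s : ℝ} (hs : 0 < s) :
    HasDerivAt (fun t : ℝ => c * t ^ p) (c * p * s ^ (p - 1)) s := by
  have h := (Real.hasDerivAt_rpow_const (p := p) (Or.inl hs.ne')).const_mul c
  refine h.congr_deriv ?_
  ring

lemma hg1 : ∀ s, 0 < s → HasDerivAt g1 (g1' s) s := by
  intro s hs
  have hlog := (Real.hasDerivAt_log hs.ne').const_mul (-2:ℝ)
  have hr := hasDerivAt_c_rpow (8/7) ((7:ℝ)/4) hs
  have h := (hlog.sub_const (8/7:ℝ)).add hr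
  refine h.congr_deriv ?_
  unfold g1'
  rw [show (7:ℝ)/4 - 1 = 3/4 by norm_num, Real.rpow_neg_one]
  ring

lemma hg1' : ∀ s, 0 < s → HasDerivAt g1' (g1'' s) s := by
  intro s hs
  have h1 := hasDerivAt_c_rpow (-2) (-(1:ℝ)) hs
  have h2 := hasDerivAt_c_rpow 2 ((3:ℝ)/4) hs
  have h := h1.add h2
  refine h.congr_deriv ?_
  rw [show -(1:ℝ) - 1 = -2 by norm_num, show (3:ℝ)/4 - 1 = -(1:ℝ)/4 by norm_num]
  unfold g1''
  ring

lemma hg2 (N : ℕ) : ∀ s, 0 < s → HasDerivAt (g2 N) (g2' N s) s := by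
  intro s hs
  have h1 := hasDerivAt_c_rpow (8 - 4*(N:ℝ)) (-(1:ℝ)) hs
  have h2 := hasDerivAt_c_rpow (4*(N:ℝ)+6) ((3:ℝ)/4) hs
  have h := h1.add h2
  refine h.congr_deriv ?_
  rw [show -(1:ℝ) - 1 = -2 by norm_num, show (3:ℝ)/4 - 1 = -(1:ℝ)/4 by norm_num]
  unfold g2'
  ring

lemma hg2' (N : ℕ) : ∀ s, 0 < s → HasDerivAt (g2' N) (g2'' N s) s := by
  intro s hs
  have h1 := hasDerivAt_c_rpow (-(8 - 4*(N:ℝ))) (-(2:ℝ)) hs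
  have h2 := hasDerivAt_c_rpow ((3/4)*(4*(N:ℝ)+6)) (-(1:ℝ)/4) hs
  have h := h1.add h2
  refine h.congr_deriv ?_
  rw [show -(2:ℝ) - 1 = -3 by norm_num, show -(1:ℝ)/4 - 1 = -(5:ℝ)/4 by norm_num]
  unfold g2''
  ring

lemma self_mul_rpow {s : ℝ} (hs : 0 < s) (p : ℝ) : s * s ^ p = s ^ (p + 1) := by
  rw [Real.rpow_add hs, Real.rpow_one, mul_comm]

lemma comb1 (N : ℕ) {s : ℝ} (hs : 0 < s) :
    4 * s * g1'' s + 2 * (N:ℝ) * g1' s = g2 N s := by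
  have e1 : s * s ^ (-(2:ℝ)) = s ^ (-(1:ℝ)) := by
    rw [self_mul_rpow hs]; norm_num
  have e2 : s * s ^ (-(1:ℝ)/4) = s ^ ((3:ℝ)/4) := by
    rw [self_mul_rpow hs]; norm_num
  unfold g1' g1'' g2
  linear_combination 8 * e1 + 6 * e2

lemma comb2 (N : ℕ) {s : ℝ} (hs : 0 < s) :
    4 * s * g2'' N s + 2 * (N:ℝ) * g2' N s
      = (8*(N:ℝ)^2 - 48*N + 64) * s ^ (-(2:ℝ))
        + (3/4)*(4*(N:ℝ)+6)*(2*(N:ℝ)-1) * s ^ (-(1:ℝ)/4) := by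
  have e3 : s * s ^ (-(3:ℝ)) = s ^ (-(2:ℝ)) := by
    rw [self_mul_rpow hs]; norm_num
  have e4 : s * s ^ (-(5:ℝ)/4) = s ^ (-(1:ℝ)/4) := by
    rw [self_mul_rpow hs]; norm_num
  unfold g2' g2''
  linear_combination (8*(8 - 4*(N:ℝ))) * e3 + (-(3:ℝ)/4*(4*(N:ℝ)+6)) * e4

/-! ### Numerical bounds -/

lemma exp_lb : (31881/100000 : ℝ) ≤ Real.exp (-(8/7)) := by
  have h17 : Real.exp (1/7 : ℝ) ≤ (∑ m ∈ Finset.range 4, (1/7:ℝ)^m / m.factorial)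
      + (1/7:ℝ)^4 * (4+1) / ((Nat.factorial 4) * 4) :=
    Real.exp_bound' (by norm_num) (by norm_num) (by norm_num)
  have hsum : (∑ m ∈ Finset.range 4, (1/7:ℝ)^m / m.factorial)
      + (1/7:ℝ)^4 * (4+1) / ((Nat.factorial 4) * 4) = 1 + 1/7 + 1/98 + 1/2058 + 5/230496 := by
    simp [Finset.sum_range_succ, Nat.factorial]
    norm_num
  rw [hsum] at h17
  have he : Real.exp 1 < 2.7182818286 := Real.exp_one_lt_d9
  have h87 : Real.exp (8/7 : ℝ) ≤ 2.7182818286 * (1 + 1/7 + 1/98 + 1/2058 + 5/230496) := by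
    have h78 : (8/7 : ℝ) = 1 + 1/7 := by norm_num
    rw [h78, Real.exp_add]
    nlinarith [Real.exp_pos (1:ℝ), Real.exp_pos (1/7:ℝ)]
  have hpos : (0:ℝ) < Real.exp (8/7) := Real.exp_pos _
  have h2 : Real.exp (8/7:ℝ) ≤ (100000/31881:ℝ) := by nlinarith
  rw [Real.exp_neg]
  calc (31881/100000:ℝ) = (100000/31881:ℝ)⁻¹ := by norm_num
    _ ≤ (Real.exp (8/7:ℝ))⁻¹ := by
        exact inv_anti₀ hpos h2

set_option maxHeartbeats 1000000 in
lemma key_ineq (N : ℕ) (hN1 : 13 ≤ N) (hN2 : N ≤ 31) {t : ℝ} (ht0 : 0 ≤ t) :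
    (8*(N:ℝ)^2 - 48*N + 64) + (3/4)*(4*(N:ℝ)+6)*(2*(N:ℝ)-1)*t
      ≤ lambda' N * ((31881/100000) *
        (1 + (8/7)*t + ((8/7)*t)^2/2 + ((8/7)*t)^3/6)) := by
  interval_cases N <;>
  · norm_num [lambda']
    nlinarith [sq_nonneg (t - 1/8), sq_nonneg (t - 1/4), mul_nonneg (mul_nonneg ht0 ht0) ht0,
      mul_nonneg ht0 (sq_nonneg (t - 1/5))]

lemma lambda'_pos {N : ℕ} (hN1 : 13 ≤ N) (hN2 : N ≤ 31) : (0:ℝ) < lambda' N := by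
  interval_cases N <;> norm_num [lambda']

lemma cubic_le_exp {u : ℝ} (hu : 0 ≤ u) : 1 + u + u^2/2 + u^3/6 ≤ Real.exp u := by
  have h := Real.sum_le_exp_of_nonneg hu 4
  have hsum : (∑ i ∈ Finset.range 4, u ^ i / i.factorial) = 1 + u + u^2/2 + u^3/6 := by
    rw [Finset.sum_range_succ, Finset.sum_range_succ, Finset.sum_range_succ, Finset.sum_range_one]
    norm_num [Nat.factorial]
    all_goals ring
  linarith [hsum ▸ h]

/-! ### Main theorem -/

theorem w_three_half_subsolution (N : ℕ) (hN1 : 13 ≤ N) (hN2 : N ≤ 31)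
    (w : EuclideanSpace ℝ (Fin N) → ℝ)
    (hw : ∀ x : EuclideanSpace ℝ (Fin N),
      w x = -4 * Real.log ‖x‖ - 8 / 7 + (8 / 7) * ‖x‖ ^ ((7 : ℝ) / 2))
    (x : EuclideanSpace ℝ (Fin N)) (hx : x ≠ 0) (hx1 : ‖x‖ < 1) :
    lap (lap w) x ≤ lambda' N * Real.exp (w x) := by
  have hr0 : 0 < ‖x‖ := norm_pos_iff.mpr hx
  have hs0 : (0:ℝ) < ‖x‖^2 := by positivity
  -- w is the radial profile g1
  have hweq : w = fun y => g1 (‖y‖^2) := by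
    funext y
    rw [hw y]
    unfold g1
    rw [Real.log_pow]
    rw [← Real.rpow_natCast ‖y‖ 2, ← Real.rpow_mul (norm_nonneg y)]
    norm_num
    ring
  -- first Laplacian
  have hlapw : ∀ y : EuclideanSpace ℝ (Fin N), y ≠ 0 → lap w y = g2 N (‖y‖^2) := by
    intro y hy
    have hsy : (0:ℝ) < ‖y‖^2 := by
      have : 0 < ‖y‖ := norm_pos_iff.mpr hy
      positivity
    rw [hweq, lap_radial_s18 g1 g1' g1'' hg1 hg1' y hy, comb1 N hsy]
  have hev : lap w =ᶠ[nhds x] (fun y => g2 N (‖y‖^2)) := by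
    filter_upwards [IsOpen.mem_nhds isOpen_compl_singleton hx] with y hy
    exact hlapw y hy
  -- second Laplacian
  have hlap2 : lap (lap w) x
      = (8*(N:ℝ)^2 - 48*N + 64) * (‖x‖^2) ^ (-(2:ℝ))
        + (3/4)*(4*(N:ℝ)+6)*(2*(N:ℝ)-1) * (‖x‖^2) ^ (-(1:ℝ)/4) := by
    rw [lap_congr_s18 hev, lap_radial_s18 (g2 N) (g2' N) (g2'' N) (hg2 N) (hg2' N) x hx, comb2 N hs0]
  rw [hlap2]
  -- rewrite powers of ‖x‖² in terms of r := ‖x‖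
  set r := ‖x‖ with hr
  set t : ℝ := r ^ ((7:ℝ)/2) with htdef
  have ht0 : 0 < t := Real.rpow_pos_of_pos hr0 _
  have hp1 : (r^2 : ℝ) ^ (-(2:ℝ)) = r ^ (-(4:ℝ)) := by
    rw [← Real.rpow_natCast r 2, ← Real.rpow_mul hr0.le]
    norm_num
  have hp2 : (r^2 : ℝ) ^ (-(1:ℝ)/4) = t * r ^ (-(4:ℝ)) := by
    rw [← Real.rpow_natCast r 2, ← Real.rpow_mul hr0.le, htdef,
      ← Real.rpow_add hr0]
    norm_num
  rw [hp1, hp2]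
  -- rewrite the right-hand side
  have hrhs : Real.exp (w x) = r ^ (-(4:ℝ)) * (Real.exp (-(8/7)) * Real.exp ((8/7) * t)) := by
    rw [hw x]
    have hsplit : -4 * Real.log r - 8 / 7 + (8 / 7) * r ^ ((7:ℝ)/2)
        = Real.log r * (-4) + (-(8/7) + (8/7) * t) := by
      rw [htdef]; ring
    rw [hsplit, Real.exp_add, Real.exp_add, ← Real.rpow_def_of_pos hr0]
  rw [hrhs]
  -- reduce to the scalar inequality
  have hr4 : (0:ℝ) < r ^ (-(4:ℝ)) := Real.rpow_pos_of_pos hr0 _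
  have main : (8*(N:ℝ)^2 - 48*N + 64) + (3/4)*(4*(N:ℝ)+6)*(2*(N:ℝ)-1)*t
      ≤ lambda' N * (Real.exp (-(8/7)) * Real.exp ((8/7) * t)) := by
    have hkey := key_ineq N hN1 hN2 ht0.le
    have hcube : 1 + (8/7)*t + ((8/7)*t)^2/2 + ((8/7)*t)^3/6 ≤ Real.exp ((8/7)*t) :=
      cubic_le_exp (by positivity)
    have hlam : (0:ℝ) < lambda' N := lambda'_pos hN1 hN2
    have hPpos : (0:ℝ) ≤ 1 + (8/7)*t + ((8/7)*t)^2/2 + ((8/7)*t)^3/6 := by positivity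
    calc (8*(N:ℝ)^2 - 48*N + 64) + (3/4)*(4*(N:ℝ)+6)*(2*(N:ℝ)-1)*t
        ≤ lambda' N * ((31881/100000) *
            (1 + (8/7)*t + ((8/7)*t)^2/2 + ((8/7)*t)^3/6)) := hkey
      _ ≤ lambda' N * (Real.exp (-(8/7)) *
            (1 + (8/7)*t + ((8/7)*t)^2/2 + ((8/7)*t)^3/6)) := by
          apply mul_le_mul_of_nonneg_left _ hlam.le
          exact mul_le_mul_of_nonneg_right exp_lb hPpos
      _ ≤ lambda' N * (Real.exp (-(8/7)) * Real.exp ((8/7) * t)) := by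
          apply mul_le_mul_of_nonneg_left _ hlam.le
          exact mul_le_mul_of_nonneg_left hcube (Real.exp_pos _).le
  calc (8*(N:ℝ)^2 - 48*N + 64) * r ^ (-(4:ℝ))
        + (3/4)*(4*(N:ℝ)+6)*(2*(N:ℝ)-1) * (t * r ^ (-(4:ℝ)))
      = ((8*(N:ℝ)^2 - 48*N + 64) + (3/4)*(4*(N:ℝ)+6)*(2*(N:ℝ)-1)*t) * r ^ (-(4:ℝ)) := by
        ring
    _ ≤ (lambda' N * (Real.exp (-(8/7)) * Real.exp ((8/7) * t))) * r ^ (-(4:ℝ)) :=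
        mul_le_mul_of_nonneg_right main hr4.le
    _ = lambda' N * (r ^ (-(4:ℝ)) * (Real.exp (-(8/7)) * Real.exp ((8/7) * t))) := by
        ring
end
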